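/- Let K be a unital based ring of finite rank with basis {b_i}_{i∈I} and involution i ↦ i*. Then the matrix M indexed by I × I, whose (j,k)-entry is the coefficient of b_k in the expansion of (Σ_{i∈I} b_i·b_{i*})·b_j in the distinguished basis, is a symmetric positive definite matrix (as a real matrix). -/

import Mathlib

/-- A unital based ring of finite rank, presented by its structure constants:
a ring free of finite rank over ℤ with distinguished basis `{b_i}_{i ∈ I}` containing
the unit, nonnegative structure constants `c i j k` (so `b_i · b_j = Σ_k c i j k • b_k`),
and an involution `i ↦ i*` of `I` inducing an anti-automorphism of the ring and such
that the coefficient of `1` in `b_i · b_j` is `1` if `j = i*` and `0` otherwise. -/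
structure BasedRingData (I : Type*) [Fintype I] [DecidableEq I] where
  /-- structure constants: `b_i · b_j = Σ_k (c i j k) • b_k` -/
  c : I → I → I → ℤ
  /-- the index of the unit element among the basis -/
  one : I
  /-- the involution `i ↦ i*` -/
  star : I → I
  nonneg : ∀ i j k, 0 ≤ c i j k
  one_mul : ∀ i k, c one i k = if k = i then 1 else 0
  mul_one : ∀ i k, c i one k = if k = i then 1 else 0
  assoc : ∀ i j k t, ∑ s, c i j s * c s k t = ∑ s, c j k s * c i s t
  star_involutive : Function.Involutive star
  /-- the involution induces an anti-automorphism `b_i ↦ b_{i*}` -/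
  star_anti : ∀ i j k, c i j k = c (star j) (star i) (star k)
  /-- the coefficient of `1` in `b_i · b_j` is `1` if `j = i*` and `0` otherwise -/
  coeff_one : ∀ i j, c i j one = if j = star i then 1 else 0

/-- Key identity: `c i j k = c j (k*) (i*)`. -/
theorem BasedRingData.cyc {I : Type*} [Fintype I] [DecidableEq I] (K : BasedRingData I)
    (i j k : I) : K.c i j k = K.c j (K.star k) (K.star i) := by
  have ha := K.assoc i j (K.star k) K.one
  simp only [K.coeff_one, mul_ite, _root_.mul_one, MulZeroClass.mul_zero] at ha
  have e1 : ∀ s : I, (K.star k = K.star s) = (s = k) := by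
    intro s
    simp [K.star_involutive.injective.eq_iff, eq_comm]
  simp only [e1] at ha
  rwa [Finset.sum_ite_eq' Finset.univ k (K.c i j),
    Finset.sum_ite_eq' Finset.univ (K.star i) (K.c j (K.star k)),
    if_pos (Finset.mem_univ _), if_pos (Finset.mem_univ _)] at ha

theorem BasedRingData.cyc' {I : Type*} [Fintype I] [DecidableEq I] (K : BasedRingData I)
    (i k s : I) : K.c s (K.star k) i = K.c i k s := by
  rw [K.cyc s (K.star k) i]
  exact (K.star_anti i k s).symm

theorem BasedRingData.sum_eq {I : Type*} [Fintype I] [DecidableEq I] (K : BasedRingData I)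
    (j k : I) :
    (∑ i, ∑ s, K.c i (K.star i) s * K.c s j k) = ∑ i, ∑ s, K.c i j s * K.c i k s := by
  have step1 : ∀ i : I, ∑ s, K.c i (K.star i) s * K.c s j k
      = ∑ s, K.c (K.star i) j s * K.c s (K.star k) (K.star i) := by
    intro i
    rw [K.assoc i (K.star i) j k]
    exact Finset.sum_congr rfl fun s _ => by rw [← K.cyc i s k]
  calc (∑ i, ∑ s, K.c i (K.star i) s * K.c s j k)
      = ∑ i, ∑ s, K.c (K.star i) j s * K.c s (K.star k) (K.star i) :=
        Finset.sum_congr rfl fun i _ => step1 i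
    _ = ∑ i, ∑ s, K.c i j s * K.c s (K.star k) i := by
        exact Fintype.sum_equiv K.star_involutive.toPerm _ _ fun i => rfl
    _ = ∑ i, ∑ s, K.c i j s * K.c i k s := by
        refine Finset.sum_congr rfl fun i _ => Finset.sum_congr rfl fun s _ => ?_
        rw [K.cyc' i k s]

/-- for a unital based ring `K` of finite rank, the real matrix `M` whose
`(j,k)`-entry is the coefficient of `b_k` in `(Σ_i b_i · b_{i*}) · b_j` is symmetric
positive definite. -/
theorem stmt_4 (I : Type*) [Fintype I] [DecidableEq I] (K : BasedRingData I)
    (M : Matrix I I ℝ)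
    (hM : ∀ j k, M j k = ∑ i, ∑ s, (K.c i (K.star i) s : ℝ) * (K.c s j k : ℝ)) :
    M.IsSymm ∧ M.PosDef := by
  have hM' : ∀ j k, M j k = ∑ i, ∑ s, (K.c i j s : ℝ) * (K.c i k s : ℝ) := by
    intro j k
    rw [hM j k]
    have := congrArg (fun z : ℤ => (z : ℝ)) (K.sum_eq j k)
    push_cast at this
    exact this
  have hsymm : M.IsSymm := by
    ext k j
    simp only [Matrix.transpose_apply, hM']
    exact Finset.sum_congr rfl fun i _ => Finset.sum_congr rfl fun s _ => mul_comm _ _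
  refine ⟨hsymm, Matrix.posDef_iff_dotProduct_mulVec.mpr ⟨?_, ?_⟩⟩
  · ext k j
    simp only [Matrix.conjTranspose_apply, star_trivial]
    have := congrFun (congrFun hsymm k) j
    simpa using this
  · intro x hx
    set A : Matrix (I × I) I ℝ := Matrix.of fun p j => (K.c p.1 j p.2 : ℝ) with hA
    have hMA : M = A.conjTranspose * A := by
      ext j k
      rw [Matrix.mul_apply, hM' j k, Fintype.sum_prod_type]
      simp [hA, Matrix.conjTranspose_apply]
    have key : dotProduct (star x) (M.mulVec x)
        = ∑ p : I × I, (∑ j, (K.c p.1 j p.2 : ℝ) * x j) ^ 2 := by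
      rw [hMA, ← Matrix.mulVec_mulVec, Matrix.dotProduct_mulVec, Matrix.vecMul_conjTranspose]
      simp [dotProduct, Matrix.mulVec, hA, pow_two]
    rw [key]
    obtain ⟨t, ht⟩ := Function.ne_iff.mp hx
    refine Finset.sum_pos' (fun p _ => sq_nonneg _) ⟨(K.one, t), Finset.mem_univ _, ?_⟩
    have hxt : (∑ j, (K.c K.one j t : ℝ) * x j) = x t := by
      have h0 : ∀ j : I, (K.c K.one j t : ℝ) = if t = j then 1 else 0 := by
        intro j; rw [BasedRingData.one_mul]; split <;> simp
      simp only [h0, ite_mul, one_mul, zero_mul]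
      rw [Finset.sum_ite_eq Finset.univ t x, if_pos (Finset.mem_univ _)]
    simp only [hxt]
    exact lt_of_le_of_ne (sq_nonneg _) (Ne.symm (pow_ne_zero 2 ht))
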